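/- The action of ℤ on its one-point compactification ℤ ∪ {∞} is a finitely presented dynamical system with special symbol: there is a finite alphabet A containing a symbol $, a subshift of finite type Φ ⊆ A^ℤ, and a continuous, surjective, ℤ-equivariant map π : Φ → ℤ ∪ {∞} such that π(σ) = n ∈ ℤ if and only if σ(n) = $. -/

import Mathlib

open OnePoint Set

/-- A subshift of finite type over `ℤ`: the intersection of all `ℤ`-translates of a
cylinder given by a finite window `F` and a set `M` of allowed patterns on `F`. -/
def IsSFTZ {A : Type*} (Φ : Set (ℤ → A)) : Prop :=
  ∃ (F : Finset ℤ) (M : Set (F → A)),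
    Φ = {σ : ℤ → A | ∀ k : ℤ, (fun f : F => σ (k + f)) ∈ M}

/-- The translation action of `ℤ` on its one-point compactification, fixing `∞`. -/
def ptTranslateZ (k : ℤ) (x : OnePoint ℤ) : OnePoint ℤ :=
  (Option.map (k + ·) x : Option ℤ)

/-- Alphabet: `L` (left of the dollar), `D` (dollar), `R` (right of the dollar). -/
inductive SymA : Type
  | L | D | R
  deriving DecidableEq

instance : Fintype SymA := ⟨{.L, .D, .R}, fun x => by cases x <;> decide⟩

/-- Allowed adjacent pairs. -/
def PA : SymA → SymA → Prop := fun a b =>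
  (a = .L ∧ b = .L) ∨ (a = .L ∧ b = .D) ∨ (a = .D ∧ b = .R) ∨ (a = .R ∧ b = .R)

/-- The subshift. -/
def PhiA : Set (ℤ → SymA) := {σ | ∀ k : ℤ, PA (σ k) (σ (k + 1))}

open Classical in
noncomputable def piA (σ : ℤ → SymA) : OnePoint ℤ :=
  if h : ∃ n, σ n = .D then ((h.choose : ℤ) : OnePoint ℤ) else ∞

lemma leftL {σ : ℤ → SymA} (hσ : σ ∈ PhiA) {m : ℤ} (h : σ m = .L) :
    σ (m - 1) = .L := by
  have hp := hσ (m - 1)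
  have : m - 1 + 1 = m := by omega
  rw [this] at hp
  rcases hp with ⟨h1, h2⟩ | ⟨h1, h2⟩ | ⟨h1, h2⟩ | ⟨h1, h2⟩ <;> simp_all

lemma rightR {σ : ℤ → SymA} (hσ : σ ∈ PhiA) {m : ℤ} (h : σ m = .R) :
    σ (m + 1) = .R := by
  have hp := hσ m
  rcases hp with ⟨h1, h2⟩ | ⟨h1, h2⟩ | ⟨h1, h2⟩ | ⟨h1, h2⟩ <;> simp_all

lemma dLeft {σ : ℤ → SymA} (hσ : σ ∈ PhiA) {n : ℤ} (h : σ n = .D) :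
    σ (n - 1) = .L := by
  have hp := hσ (n - 1)
  have : n - 1 + 1 = n := by omega
  rw [this] at hp
  rcases hp with ⟨h1, h2⟩ | ⟨h1, h2⟩ | ⟨h1, h2⟩ | ⟨h1, h2⟩ <;> simp_all

lemma dRight {σ : ℤ → SymA} (hσ : σ ∈ PhiA) {n : ℤ} (h : σ n = .D) :
    σ (n + 1) = .R := by
  have hp := hσ n
  rcases hp with ⟨h1, h2⟩ | ⟨h1, h2⟩ | ⟨h1, h2⟩ | ⟨h1, h2⟩ <;> simp_all

lemma allLeft {σ : ℤ → SymA} (hσ : σ ∈ PhiA) {n : ℤ} (h : σ n = .D) :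
    ∀ j : ℕ, σ (n - 1 - j) = .L := by
  intro j
  induction j with
  | zero => simpa using dLeft hσ h
  | succ j ih =>
      have := leftL hσ ih
      have heq : n - 1 - (j : ℤ) - 1 = n - 1 - ((j : ℕ) + 1 : ℕ) := by push_cast; omega
      rwa [heq] at this

lemma allRight {σ : ℤ → SymA} (hσ : σ ∈ PhiA) {n : ℤ} (h : σ n = .D) :
    ∀ j : ℕ, σ (n + 1 + j) = .R := by
  intro j
  induction j with
  | zero => simpa using dRight hσ h
  | succ j ih =>
      have := rightR hσ ih
      have heq : n + 1 + (j : ℤ) + 1 = n + 1 + ((j : ℕ) + 1 : ℕ) := by push_cast; omega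
      rwa [heq] at this

lemma uniqD {σ : ℤ → SymA} (hσ : σ ∈ PhiA) {n m : ℤ} (hn : σ n = .D)
    (hm : σ m = .D) : m = n := by
  by_contra hne
  rcases lt_or_gt_of_ne hne with hlt | hgt
  · have := allLeft hσ hn (n - 1 - m).toNat
    have heq : n - 1 - ((n - 1 - m).toNat : ℤ) = m := by omega
    rw [heq, hm] at this
    exact absurd this (by decide)
  · have := allRight hσ hn (m - n - 1).toNat
    have heq : n + 1 + ((m - n - 1).toNat : ℤ) = m := by omega
    rw [heq, hm] at this
    exact absurd this (by decide)

lemma piA_eq_iff {σ : ℤ → SymA} (hσ : σ ∈ PhiA) (n : ℤ) :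
    piA σ = (n : OnePoint ℤ) ↔ σ n = .D := by
  unfold piA
  by_cases h : ∃ m, σ m = .D
  · rw [dif_pos h]
    have hc := h.choose_spec
    constructor
    · intro he
      have : h.choose = n := OnePoint.coe_injective he
      rwa [this] at hc
    · intro hn
      have : h.choose = n := uniqD hσ hn hc
      rw [this]
  · rw [dif_neg h]
    constructor
    · intro he; exact absurd he (OnePoint.infty_ne_coe n)
    · intro hn; exact absurd ⟨n, hn⟩ h

lemma piA_infty {σ : ℤ → SymA} (h : ¬∃ n, σ n = .D) : piA σ = ∞ := dif_neg h

/-- The configuration with the dollar at `n`. -/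
def sigAt (n : ℤ) : ℤ → SymA := fun m => if m < n then .L else if m = n then .D else .R

lemma sigAt_mem (n : ℤ) : sigAt n ∈ PhiA := by
  intro k
  unfold PA sigAt
  rcases lt_trichotomy k n with h | h | h
  · rcases eq_or_lt_of_le (by omega : k + 1 ≤ n) with h2 | h2
    · right; left; constructor <;> simp [h, h2]
    · left; constructor <;> simp [h, h2]
  · right; right; left
    constructor <;> simp [h]
  · right; right; right
    constructor <;> [skip; skip] <;> rw [if_neg (by omega), if_neg (by omega)]

lemma sigAt_self (n : ℤ) : sigAt n n = .D := by simp [sigAt]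

theorem contAux :
    letI : TopologicalSpace SymA := ⊥
    Continuous (fun σ : PhiA => piA σ.1) := by
  letI : TopologicalSpace SymA := ⊥
  haveI : DiscreteTopology SymA := ⟨rfl⟩
  have hopen : ∀ n : ℤ, IsOpen {τ : PhiA | τ.1 n = .D} := by
    intro n
    have : Continuous (fun τ : PhiA => τ.1 n) :=
      (continuous_apply n).comp continuous_subtype_val
    exact (isOpen_discrete {SymA.D}).preimage this
  have hclosed : ∀ n : ℤ, IsOpen {τ : PhiA | τ.1 n ≠ .D} := by
    intro n
    have : Continuous (fun τ : PhiA => τ.1 n) :=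
      (continuous_apply n).comp continuous_subtype_val
    exact (isOpen_discrete ({SymA.D}ᶜ : Set SymA)).preimage this
  rw [continuous_def]
  intro s hs
  by_cases hinf : ∞ ∈ s
  · have hfin : (((↑) : ℤ → OnePoint ℤ) ⁻¹' s)ᶜ.Finite := by
      have h2 := ((OnePoint.isOpen_iff_of_mem hinf).mp hs).2
      exact h2.finite_of_discrete
    have heq : (fun σ : PhiA => piA σ.1) ⁻¹' s
        = ⋂ n ∈ (((↑) : ℤ → OnePoint ℤ) ⁻¹' s)ᶜ, {τ : PhiA | τ.1 n ≠ .D} := by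
      ext ⟨τ, hτ⟩
      simp only [Set.mem_preimage, Set.mem_iInter, Set.mem_setOf_eq, Set.mem_compl_iff]
      constructor
      · intro hmem n hn hD
        have := (piA_eq_iff hτ n).mpr hD
        rw [this] at hmem
        exact hn hmem
      · intro hall
        by_cases hd : ∃ n, τ n = .D
        · obtain ⟨n, hn⟩ := hd
          rw [(piA_eq_iff hτ n).mpr hn]
          by_contra h'
          exact hall n h' hn
        · rw [piA_infty hd]; exact hinf
    rw [heq]
    exact hfin.isOpen_biInter fun n _ => hclosed n
  · have heq : (fun σ : PhiA => piA σ.1) ⁻¹' s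
        = ⋃ n ∈ (((↑) : ℤ → OnePoint ℤ) ⁻¹' s), {τ : PhiA | τ.1 n = .D} := by
      ext ⟨τ, hτ⟩
      simp only [Set.mem_preimage, Set.mem_iUnion, Set.mem_setOf_eq, exists_prop]
      constructor
      · intro hmem
        by_cases hd : ∃ n, τ n = .D
        · obtain ⟨n, hn⟩ := hd
          refine ⟨n, ?_, hn⟩
          rwa [(piA_eq_iff hτ n).mpr hn] at hmem
        · rw [piA_infty hd] at hmem; exact absurd hmem hinf
      · rintro ⟨n, hns, hn⟩
        rw [(piA_eq_iff hτ n).mpr hn]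
        exact hns
    rw [heq]
    exact isOpen_biUnion fun n _ => hopen n

theorem stmt14 :
    ∃ (A : Type) (_ : Fintype A) (dollar : A) (Φ : Set (ℤ → A))
      (π : (ℤ → A) → OnePoint ℤ),
      IsSFTZ Φ ∧
      (letI : TopologicalSpace A := ⊥;
        Continuous (fun σ : Φ => π σ.1)) ∧
      Function.Surjective (fun σ : Φ => π σ.1) ∧
      (∀ σ ∈ Φ, ∀ k : ℤ, π (fun m => σ (m - k)) = ptTranslateZ k (π σ)) ∧
      (∀ σ ∈ Φ, ∀ n : ℤ, π σ = (n : OnePoint ℤ) ↔ σ n = dollar) := by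
  refine ⟨SymA, inferInstance, .D, PhiA, piA, ?_, contAux, ?_, ?_, ?_⟩
  · -- SFT
    refine ⟨{0, 1}, {f | PA (f ⟨0, by decide⟩) (f ⟨1, by decide⟩)}, ?_⟩
    ext σ
    simp only [PhiA, Set.mem_setOf_eq]
    constructor
    · intro h k
      simpa using h k
    · intro h k
      simpa using h k
  · -- surjective
    intro x
    by_cases hx : x = ∞
    · refine ⟨⟨fun _ => .L, fun k => Or.inl ⟨rfl, rfl⟩⟩, ?_⟩
      simp only
      rw [piA_infty (by push_neg; intro n; decide), hx]
    · obtain ⟨n, rfl⟩ := (OnePoint.ne_infty_iff_exists).mp hx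
      exact ⟨⟨sigAt n, sigAt_mem n⟩, (piA_eq_iff (sigAt_mem n) n).mpr (sigAt_self n)⟩
  · -- equivariance
    intro σ hσ k
    by_cases h : ∃ n, σ n = .D
    · have hc := h.choose_spec
      have h' : ∃ m, (fun m => σ (m - k)) m = .D :=
        ⟨h.choose + k, by simp only []; rw [show h.choose + k - k = h.choose by omega]; exact hc⟩
      have hc' := h'.choose_spec
      simp only at hc'
      have h1 : piA (fun m => σ (m - k)) = ((h'.choose : ℤ) : OnePoint ℤ) := dif_pos h'
      have h2 : piA σ = ((h.choose : ℤ) : OnePoint ℤ) := dif_pos h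
      have h3 : h'.choose - k = h.choose := uniqD hσ hc hc'
      rw [h1, h2]
      have : ptTranslateZ k ((h.choose : ℤ) : OnePoint ℤ) = ((k + h.choose : ℤ) : OnePoint ℤ) := rfl
      rw [this, OnePoint.coe_eq_coe]
      omega
    · have h' : ¬∃ m, (fun m => σ (m - k)) m = .D := by
        rintro ⟨m, hm⟩
        exact h ⟨m - k, hm⟩
      rw [piA_infty h', piA_infty h]
      rfl
  · intro σ hσ n
    exact piA_eq_iff hσ n
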